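/- Every topological space with a point-countable base is a D₀-space: every compact subset has a countable neighborhood base of open sets. -/

import Mathlib

open Set TopologicalSpace

/-- `𝓕` is a finite irreducible (minimal) cover of `K` by members of `ℬ`. -/
def IrredCover {X : Type*} (ℬ : Set (Set X)) (K : Set X) (𝓕 : Set (Set X)) : Prop :=
  𝓕 ⊆ ℬ ∧ 𝓕.Finite ∧ K ⊆ ⋃₀ 𝓕 ∧ ∀ B ∈ 𝓕, ¬ K ⊆ ⋃₀ (𝓕 \ {B})

/-- Miščenko's lemma: with a point-countable family `ℬ`, for every `n` and every
set `K` there are only countably many irreducible covers of `K` of size `n`. -/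
lemma irredCover_countable {X : Type*} (ℬ : Set (Set X))
    (hpc : ∀ x : X, {B ∈ ℬ | x ∈ B}.Countable) :
    ∀ (n : ℕ) (K : Set X), {𝓕 | IrredCover ℬ K 𝓕 ∧ 𝓕.ncard = n}.Countable := by
  intro n
  induction n with
  | zero =>
    intro K
    apply Set.Countable.mono _ (Set.countable_singleton (∅ : Set (Set X)))
    rintro 𝓕 ⟨⟨_, hfin, _, _⟩, hcard⟩
    simpa using (Set.ncard_eq_zero hfin).mp hcard
  | succ n ih =>
    intro K
    rcases eq_empty_or_nonempty K with hK | ⟨x, hx⟩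
    · subst hK
      have : {𝓕 | IrredCover ℬ (∅ : Set X) 𝓕 ∧ 𝓕.ncard = n + 1} = ∅ := by
        ext 𝓕
        simp only [mem_setOf_eq, mem_empty_iff_false, iff_false, not_and]
        rintro ⟨_, hfin, _, h4⟩ hcard
        have hne : 𝓕.Nonempty := by
          rw [← Set.ncard_pos hfin, hcard]; omega
        obtain ⟨B, hBf⟩ := hne
        exact h4 B hBf (empty_subset _)
      rw [this]; exact Set.countable_empty
    · have hsub : {𝓕 | IrredCover ℬ K 𝓕 ∧ 𝓕.ncard = n + 1} ⊆
          ⋃ B ∈ {B ∈ ℬ | x ∈ B},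
            (insert B) '' {𝓕 | IrredCover ℬ (K \ B) 𝓕 ∧ 𝓕.ncard = n} := by
        rintro 𝓕 ⟨⟨h1, h2, h3, h4⟩, hcard⟩
        obtain ⟨B, hBf, hxB⟩ := h3 hx
        refine mem_iUnion₂.mpr ⟨B, ⟨h1 hBf, hxB⟩, 𝓕 \ {B}, ⟨⟨?_, h2.diff, ?_, ?_⟩, ?_⟩, ?_⟩
        · exact (diff_subset).trans h1
        · -- K \ B ⊆ ⋃₀ (𝓕 \ {B})
          rintro y ⟨hyK, hyB⟩
          obtain ⟨C, hCf, hyC⟩ := h3 hyK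
          exact ⟨C, ⟨hCf, fun hCB => hyB (hCB ▸ hyC)⟩, hyC⟩
        · -- irreducibility
          rintro C ⟨hCf, hCB⟩ hsub'
          apply h4 C hCf
          intro y hyK
          by_cases hyB : y ∈ B
          · exact ⟨B, ⟨hBf, fun h => hCB (by simpa using h.symm)⟩, hyB⟩
          · obtain ⟨D, ⟨⟨hDf, hDB⟩, hDC⟩, hyD⟩ := hsub' ⟨hyK, hyB⟩
            exact ⟨D, ⟨hDf, hDC⟩, hyD⟩
        · -- ncard
          have := Set.ncard_diff_singleton_of_mem hBf
          omega
        · -- insert B (𝓕 \ {B}) = 𝓕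
          rw [Set.insert_diff_singleton, Set.insert_eq_of_mem hBf]
      refine Set.Countable.mono hsub (Set.Countable.biUnion (hpc x) fun B _ => ?_)
      exact (ih (K \ B)).image _

/-- Any finite cover of `K` from `ℬ` contains an irreducible subcover. -/
lemma exists_irred_subcover {X : Type*} (ℬ : Set (Set X)) (K : Set X) :
    ∀ (n : ℕ) (𝓖 : Set (Set X)), 𝓖.Finite → 𝓖.ncard ≤ n → 𝓖 ⊆ ℬ → K ⊆ ⋃₀ 𝓖 →
      ∃ 𝓕, 𝓕 ⊆ 𝓖 ∧ IrredCover ℬ K 𝓕 := by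
  intro n
  induction n with
  | zero =>
    intro 𝓖 hfin hcard hGB hcov
    have h0 : 𝓖 = ∅ := by
      rw [← Set.ncard_eq_zero hfin]; omega
    subst h0
    exact ⟨∅, Subset.rfl, empty_subset _, finite_empty, hcov, by simp⟩
  | succ n ih =>
    intro 𝓖 hfin hcard hGB hcov
    by_cases h : ∃ B ∈ 𝓖, K ⊆ ⋃₀ (𝓖 \ {B})
    · obtain ⟨B, hBG, hB⟩ := h
      have hc : (𝓖 \ {B}).ncard ≤ n := by
        have := Set.ncard_diff_singleton_of_mem hBG
        have hpos : 0 < 𝓖.ncard := (Set.ncard_pos hfin).mpr ⟨B, hBG⟩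
        omega
      obtain ⟨𝓕, h𝓕sub, h𝓕⟩ := ih (𝓖 \ {B}) hfin.diff hc ((diff_subset).trans hGB) hB
      exact ⟨𝓕, h𝓕sub.trans diff_subset, h𝓕⟩
    · push_neg at h
      exact ⟨𝓖, Subset.rfl, hGB, hfin, hcov, h⟩

/-- A space with a point-countable base is a `D₀`-space: every compact subset
has a countable neighborhood base of open sets. -/
theorem d0_of_pointCountable_base {X : Type*} [TopologicalSpace X]
    (ℬ : Set (Set X)) (hB : IsTopologicalBasis ℬ)
    (hpc : ∀ x : X, {B ∈ ℬ | x ∈ B}.Countable) :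
    ∀ K : Set X, IsCompact K → ∃ 𝓑 : Set (Set X), 𝓑.Countable ∧
      (∀ B ∈ 𝓑, IsOpen B ∧ K ⊆ B) ∧
      ∀ U : Set X, IsOpen U → K ⊆ U → ∃ B ∈ 𝓑, B ⊆ U := by
  intro K hK
  refine ⟨(⋃₀ ·) '' {𝓕 | IrredCover ℬ K 𝓕}, ?_, ?_, ?_⟩
  · apply Set.Countable.image
    have : {𝓕 | IrredCover ℬ K 𝓕} = ⋃ n, {𝓕 | IrredCover ℬ K 𝓕 ∧ 𝓕.ncard = n} := by
      ext 𝓕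
      simp only [mem_setOf_eq, mem_iUnion]
      exact ⟨fun h => ⟨𝓕.ncard, h, rfl⟩, fun ⟨n, h, _⟩ => h⟩
    rw [this]
    exact Set.countable_iUnion fun n => irredCover_countable ℬ hpc n K
  · rintro B ⟨𝓕, ⟨h1, h2, h3, h4⟩, rfl⟩
    exact ⟨isOpen_sUnion fun t ht => hB.isOpen (h1 ht), h3⟩
  · intro U hU hKU
    have hch : ∀ x : X, ∃ v : Set X, x ∈ K → v ∈ ℬ ∧ x ∈ v ∧ v ⊆ U := by
      intro x
      by_cases hx : x ∈ K
      · obtain ⟨v, hv1, hv2, hv3⟩ := hB.exists_subset_of_mem_open (hKU hx) hU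
        exact ⟨v, fun _ => ⟨hv1, hv2, hv3⟩⟩
      · exact ⟨univ, fun h => absurd h hx⟩
    choose V hV using hch
    obtain ⟨t, htK, htcov⟩ := hK.elim_nhds_subcover V fun x hx =>
      ((hB.isOpen (hV x hx).1).mem_nhds (hV x hx).2.1)
    set 𝓖 : Set (Set X) := V '' (t : Set X) with h𝓖
    have hGfin : 𝓖.Finite := t.finite_toSet.image V
    have hGB : 𝓖 ⊆ ℬ := by
      rintro _ ⟨x, hxt, rfl⟩; exact (hV x (htK x hxt)).1
    have hGcov : K ⊆ ⋃₀ 𝓖 := by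
      intro y hy
      obtain ⟨x, hxt, hyx⟩ := by simpa using htcov hy
      exact ⟨V x, ⟨x, hxt, rfl⟩, hyx⟩
    have hGU : ⋃₀ 𝓖 ⊆ U := by
      rintro y ⟨_, ⟨x, hxt, rfl⟩, hy⟩
      exact (hV x (htK x hxt)).2.2 hy
    obtain ⟨𝓕, h𝓕G, h𝓕⟩ := exists_irred_subcover ℬ K 𝓖.ncard 𝓖 hGfin le_rfl hGB hGcov
    exact ⟨⋃₀ 𝓕, ⟨𝓕, h𝓕, rfl⟩, (sUnion_subset_sUnion h𝓕G).trans hGU⟩
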